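/- Suppose for each message x ∈ {0,1}^n Bob's (unnormalized) mixed state is {2^{m/2} (I_m ⊗ Λ)|φ_{x,l}⟩}_{l ∈ {0,1}^{E-m}}, where Λ = Σ_a √λ_a |a⟩⟨a| with λ_a ≥ 0, Σ_a λ_a = 1, and for each x the family {|φ_{x,l}⟩}_l is orthonormal in ℂ^{2^m} ⊗ ℂ^{2^E}. If Bob decodes with orthogonal projections {P_x} with mutually orthogonal ranges summing to at most the identity, then the probability of correct decoding of a uniformly random message, Pr[C] = 2^{-n} Σ_x 2^m Σ_l ‖P_x (I_m ⊗ Λ)|φ_{x,l}⟩‖², is at most 2^{2m}/2^n. -/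

import Mathlib

open Kronecker Matrix

lemma euclid_norm_sq {J : Type*} [Fintype J] (x : EuclideanSpace ℂ J) :
    ‖x‖^2 = ∑ i, ‖x i‖^2 := by
  rw [EuclideanSpace.norm_eq, Real.sq_sqrt]; positivity

lemma coord_eq_inner {J : Type*} [Fintype J] [DecidableEq J]
    (w : EuclideanSpace ℂ J) (j : J) :
    w j = inner (𝕜 := ℂ) (EuclideanSpace.single j (1:ℂ)) w := by
  simp [EuclideanSpace.inner_single_left]

lemma hs_bound {ι J : Type*} [Fintype ι] [Fintype J] [DecidableEq J]
    (φ : ι → EuclideanSpace ℂ J) (hφ : Orthonormal ℂ φ)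
    (A : EuclideanSpace ℂ J →ₗ[ℂ] EuclideanSpace ℂ J) :
    ∑ l, ‖A (φ l)‖^2 ≤ ∑ j, ‖A (EuclideanSpace.single j (1:ℂ))‖^2 := by
  set e : J → EuclideanSpace ℂ J := fun j => EuclideanSpace.single j (1:ℂ) with he
  calc ∑ l, ‖A (φ l)‖^2 = ∑ l, ∑ j, ‖(A (φ l)) j‖^2 := by
        simp_rw [euclid_norm_sq]
    _ = ∑ j, ∑ l, ‖(inner (𝕜 := ℂ) (φ l) (LinearMap.adjoint A (e j)) : ℂ)‖^2 := by
        rw [Finset.sum_comm]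
        congr 1; ext j; congr 1; ext l
        rw [coord_eq_inner (A (φ l)) j, ← LinearMap.adjoint_inner_left, ← norm_inner_symm]
    _ ≤ ∑ j, ‖LinearMap.adjoint A (e j)‖^2 := by
        apply Finset.sum_le_sum
        intro j _
        exact hφ.sum_inner_products_le _
    _ = ∑ j, ∑ i, ‖(LinearMap.adjoint A (e j)) i‖^2 := by
        simp_rw [euclid_norm_sq]
    _ = ∑ i, ∑ j, ‖(A (e i)) j‖^2 := by
        rw [Finset.sum_comm]
        congr 1; ext i; congr 1; ext j
        rw [coord_eq_inner (LinearMap.adjoint A (e j)) i, LinearMap.adjoint_inner_right,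
          ← norm_inner_symm, ← coord_eq_inner]
    _ = ∑ j, ‖A (e j)‖^2 := by simp_rw [euclid_norm_sq]

lemma toEuclideanLin_single {J : Type*} [Fintype J] [DecidableEq J]
    (A : Matrix J J ℂ) (j i : J) :
    (Matrix.toEuclideanLin A (EuclideanSpace.single j (1:ℂ))) i = A i j := by
  have h : (EuclideanSpace.single j (1:ℂ)) = (WithLp.equiv 2 (J → ℂ)).symm (Pi.single j 1) := rfl
  rw [h]; show (A *ᵥ Pi.single j 1) i = A i j; rw [Matrix.mulVec_single_one]
  rfl

theorem stmt_8 (n E m : ℕ) (hm : m ≤ E)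
    (lam : (Fin E → Bool) → ℝ) (hlam : ∀ a, 0 ≤ lam a) (hsum : ∑ a, lam a = 1)
    (Λ : Matrix (Fin E → Bool) (Fin E → Bool) ℂ)
    (hΛ : Λ = Matrix.diagonal fun a => (Real.sqrt (lam a) : ℂ))
    (φ : (Fin n → Bool) → (Fin (E - m) → Bool) →
      EuclideanSpace ℂ ((Fin m → Bool) × (Fin E → Bool)))
    (hφ : ∀ x, Orthonormal ℂ (φ x))
    (P : (Fin n → Bool) →
      EuclideanSpace ℂ ((Fin m → Bool) × (Fin E → Bool)) →ₗ[ℂ]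
        EuclideanSpace ℂ ((Fin m → Bool) × (Fin E → Bool)))
    (hidem : ∀ x, P x ∘ₗ P x = P x)
    (hsa : ∀ x, LinearMap.adjoint (P x) = P x)
    (horth : ∀ x y, x ≠ y → P x ∘ₗ P y = 0)
    (hle : ∀ v, ∑ x, ‖P x v‖ ^ 2 ≤ ‖v‖ ^ 2)
    (PrC : ℝ)
    (hPrC : PrC = ((2 : ℝ) ^ n)⁻¹ * ∑ x, (2 : ℝ) ^ m *
      ∑ l, ‖P x (Matrix.toEuclideanLin
        ((1 : Matrix (Fin m → Bool) (Fin m → Bool) ℂ) ⊗ₖ Λ) (φ x l))‖ ^ 2) :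
    PrC ≤ (2 : ℝ) ^ (2 * m) / (2 : ℝ) ^ n := by
  set M : EuclideanSpace ℂ ((Fin m → Bool) × (Fin E → Bool)) →ₗ[ℂ]
      EuclideanSpace ℂ ((Fin m → Bool) × (Fin E → Bool)) :=
    Matrix.toEuclideanLin ((1 : Matrix (Fin m → Bool) (Fin m → Bool) ℂ) ⊗ₖ Λ) with hM
  -- Hilbert–Schmidt norm of M squared is 2^m
  have htr : ∑ j : (Fin m → Bool) × (Fin E → Bool),
      ‖M (EuclideanSpace.single j (1:ℂ))‖^2 = (2:ℝ)^m := by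
    have hcol : ∀ j : (Fin m → Bool) × (Fin E → Bool),
        ‖M (EuclideanSpace.single j (1:ℂ))‖^2
          = ∑ i, ‖((1 : Matrix (Fin m → Bool) (Fin m → Bool) ℂ) ⊗ₖ Λ) i j‖^2 := by
      intro j
      rw [euclid_norm_sq]
      congr 1; ext i
      rw [hM, toEuclideanLin_single]
    simp_rw [hcol]
    subst hΛ
    simp only [Fintype.sum_prod_type, Matrix.kroneckerMap_apply, Matrix.one_apply,
      Matrix.diagonal_apply, norm_mul, mul_pow, apply_ite (‖·‖), norm_one, norm_zero,
      ite_pow, one_pow, zero_pow, mul_ite, mul_one, mul_zero, ite_mul, one_mul, zero_mul]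
    simp [Finset.sum_ite_eq', Complex.norm_real, abs_of_nonneg (Real.sqrt_nonneg _),
      Real.sq_sqrt (hlam _), hsum]
  -- main estimate
  have key : ∑ x, ∑ l, ‖P x (M (φ x l))‖^2 ≤ (2:ℝ)^m := by
    calc ∑ x, ∑ l, ‖P x (M (φ x l))‖^2
        ≤ ∑ x, ∑ j : (Fin m → Bool) × (Fin E → Bool),
            ‖(P x ∘ₗ M) (EuclideanSpace.single j (1:ℂ))‖^2 := by
          apply Finset.sum_le_sum
          intro x _
          exact hs_bound (φ x) (hφ x) (P x ∘ₗ M)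
      _ = ∑ j : (Fin m → Bool) × (Fin E → Bool),
            ∑ x, ‖P x (M (EuclideanSpace.single j (1:ℂ)))‖^2 := by
          rw [Finset.sum_comm]; rfl
      _ ≤ ∑ j : (Fin m → Bool) × (Fin E → Bool),
            ‖M (EuclideanSpace.single j (1:ℂ))‖^2 := by
          exact Finset.sum_le_sum fun j _ => hle _
      _ = (2:ℝ)^m := htr
  rw [hPrC, ← Finset.mul_sum]
  rw [div_eq_inv_mul, two_mul, pow_add]
  have h2n : (0:ℝ) < (2:ℝ)^n := by positivity
  gcongr
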